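/- Let u : ℝⁿ → ℝ be a C³ function. Then the cofactor matrix of the Hessian D²u has divergence-free rows: for each i, Σ_{j=1}^{n} D_j (cof(D²u))_{ij} = 0. -/

import Mathlib

/-- The cofactor matrix: `(i,j)` entry is `(−1)^{i+j}` times the `(i,j)` minor. -/
noncomputable def cof {n : ℕ} (P : Matrix (Fin (n + 1)) (Fin (n + 1)) ℝ) :
    Matrix (Fin (n + 1)) (Fin (n + 1)) ℝ :=
  Matrix.of fun i j =>
    (-1 : ℝ) ^ (i.val + j.val) * (P.submatrix i.succAbove j.succAbove).det

/-- Partial derivative in the `j`-th coordinate direction. -/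
noncomputable def pderiv {n : ℕ} (j : Fin (n + 1))
    (f : (Fin (n + 1) → ℝ) → ℝ) (x : Fin (n + 1) → ℝ) : ℝ :=
  fderiv ℝ f x (Pi.single j 1)

lemma det_row_perm {n : ℕ} (M : Matrix (Fin (n+1)) (Fin (n+1)) ℝ) :
    M.det = ∑ σ : Equiv.Perm (Fin (n+1)), (Equiv.Perm.sign σ : ℝ) * ∏ m, M m (σ m) := by
  rw [← Matrix.det_transpose, Matrix.det_apply']
  rfl

lemma cof_eq_det_updateRow {n : ℕ} (P : Matrix (Fin (n+1)) (Fin (n+1)) ℝ) (i j : Fin (n+1)) :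
    cof P i j = (P.updateRow i (Pi.single j 1)).det := by
  rw [Matrix.det_succ_row _ i, Finset.sum_eq_single j]
  · have hsub : (P.updateRow i (Pi.single j 1)).submatrix i.succAbove j.succAbove
        = P.submatrix i.succAbove j.succAbove := by
      ext a b
      simp [Matrix.updateRow_ne (Fin.succAbove_ne i a)]
    simp [cof, hsub]
  · intro b _ hb
    simp [Pi.single_apply, hb]
  · simp

lemma cof_perm_sum {n : ℕ} (P : Matrix (Fin (n+1)) (Fin (n+1)) ℝ) (i j : Fin (n+1)) :
    cof P i j = ∑ σ : Equiv.Perm (Fin (n+1)), ((Equiv.Perm.sign σ : ℝ) *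
      (if σ i = j then 1 else 0)) * ∏ m ∈ Finset.univ.erase i, P m (σ m) := by
  rw [cof_eq_det_updateRow, det_row_perm]
  refine Finset.sum_congr rfl fun σ _ => ?_
  rw [mul_assoc]
  congr 1
  rw [← Finset.mul_prod_erase Finset.univ _ (Finset.mem_univ i)]
  congr 1
  · simp [Pi.single_apply, eq_comm]
  · refine Finset.prod_congr rfl fun m hm => ?_
    rw [Matrix.updateRow_ne (Finset.ne_of_mem_erase hm)]

lemma contDiff_pderiv {n : ℕ} {m : ℕ∞} {f : (Fin (n+1) → ℝ) → ℝ} (hf : ContDiff ℝ (m+1) f)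
    (k : Fin (n+1)) : ContDiff ℝ m (pderiv k f) :=
  (hf.fderiv_right le_rfl).clm_apply contDiff_const

lemma pderiv_comm {n : ℕ} {f : (Fin (n+1) → ℝ) → ℝ} (hf : ContDiff ℝ 2 f)
    (a b : Fin (n+1)) (x : Fin (n+1) → ℝ) :
    pderiv a (fun y => pderiv b f y) x = pderiv b (fun y => pderiv a f y) x := by
  have hd : ∀ y, HasFDerivAt f (fderiv ℝ f y) y := fun y =>
    (hf.differentiable (by norm_num) y).hasFDerivAt
  have hf' : ContDiff ℝ 1 (fderiv ℝ f) := hf.fderiv_right (by norm_num)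
  have hd2 : HasFDerivAt (fderiv ℝ f) (fderiv ℝ (fderiv ℝ f) x) x :=
    (hf'.differentiable one_ne_zero x).hasFDerivAt
  have hsym := second_derivative_symmetric hd hd2
  have key : ∀ c d : Fin (n+1), pderiv c (fun y => pderiv d f y) x
      = fderiv ℝ (fderiv ℝ f) x (Pi.single c 1) (Pi.single d 1) := by
    intro c d
    show fderiv ℝ (fun y => (fderiv ℝ f y) (Pi.single d 1)) x (Pi.single c 1) = _
    rw [fderiv_clm_apply (hf'.differentiable one_ne_zero x) (differentiableAt_const _)]
    simp
  rw [key a b, key b a, hsym]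

/-- For `u ∈ C³(ℝⁿ)`, the cofactor matrix of the Hessian `D²u` has
divergence-free rows: `Σ_j D_j (cof (D²u))_{ij} = 0` for each `i`. -/
theorem cofactor_hessian_divergence_free {n : ℕ}
    (u : (Fin (n + 1) → ℝ) → ℝ) (hu : ContDiff ℝ 3 u) :
    ∀ (x : Fin (n + 1) → ℝ) (i : Fin (n + 1)),
      ∑ j : Fin (n + 1),
        pderiv j (fun y => cof (Matrix.of fun a b => pderiv b (pderiv a u) y) i j) x
        = 0 := by
  intro x i
  have hu3 : ContDiff ℝ ((2:ℕ∞)+1) u := by norm_num; exact hu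
  have hu2 : ∀ k, ContDiff ℝ 2 (pderiv k u) := fun k => contDiff_pderiv hu3 k
  have hu2' : ∀ k, ContDiff ℝ ((1:ℕ∞)+1) (pderiv k u) := by
    intro k; norm_num; exact hu2 k
  have hg1 : ∀ m b : Fin (n+1), ContDiff ℝ 1 (pderiv b (pderiv m u)) := fun m b =>
    contDiff_pderiv (hu2' m) b
  set s : Finset (Fin (n+1)) := Finset.univ.erase i with hs
  -- Step 1: compute each pderiv j of the cofactor entry
  have hF : ∀ j : Fin (n+1),
      pderiv j (fun y => cof (Matrix.of fun a b => pderiv b (pderiv a u) y) i j) x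
      = ∑ σ : Equiv.Perm (Fin (n+1)), ((Equiv.Perm.sign σ : ℝ) * (if σ i = j then 1 else 0)) *
          ∑ k ∈ s, (∏ m ∈ s.erase k, pderiv (σ m) (pderiv m u) x) *
            pderiv j (pderiv (σ k) (pderiv k u)) x := by
    intro j
    have h1 : (fun y => cof (Matrix.of fun a b => pderiv b (pderiv a u) y) i j)
        = fun y => ∑ σ : Equiv.Perm (Fin (n+1)),
            ((Equiv.Perm.sign σ : ℝ) * (if σ i = j then 1 else 0)) *
            ∏ m ∈ s, pderiv (σ m) (pderiv m u) y := by
      funext y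
      exact cof_perm_sum (Matrix.of fun a b => pderiv b (pderiv a u) y) i j
    rw [h1]
    have hP : ∀ σ : Equiv.Perm (Fin (n+1)),
        HasFDerivAt (fun y => ∏ m ∈ s, pderiv (σ m) (pderiv m u) y)
          (∑ k ∈ s, (∏ m ∈ s.erase k, pderiv (σ m) (pderiv m u) x) •
            fderiv ℝ (pderiv (σ k) (pderiv k u)) x) x := by
      intro σ
      exact HasFDerivAt.finset_prod fun k _ =>
        ((hg1 k (σ k)).differentiable one_ne_zero x).hasFDerivAt
    have hsum : HasFDerivAt
        (fun y => ∑ σ : Equiv.Perm (Fin (n+1)),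
          ((Equiv.Perm.sign σ : ℝ) * (if σ i = j then 1 else 0)) *
          ∏ m ∈ s, pderiv (σ m) (pderiv m u) y)
        (∑ σ : Equiv.Perm (Fin (n+1)),
          ((Equiv.Perm.sign σ : ℝ) * (if σ i = j then 1 else 0)) •
          ∑ k ∈ s, (∏ m ∈ s.erase k, pderiv (σ m) (pderiv m u) x) •
            fderiv ℝ (pderiv (σ k) (pderiv k u)) x) x :=
      HasFDerivAt.fun_sum fun σ _ => (hP σ).const_mul _
    show fderiv ℝ _ x (Pi.single j 1) = _
    rw [hsum.fderiv]
    simp only [ContinuousLinearMap.coe_sum', Finset.sum_apply,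
      ContinuousLinearMap.coe_smul', Pi.smul_apply, smul_eq_mul]
    refine Finset.sum_congr rfl fun σ _ => ?_
    simp only [Finset.mul_sum]
    exact Finset.sum_congr rfl fun k _ => rfl
  -- Step 2: sum over j, collapse the indicator
  rw [Finset.sum_congr rfl fun j _ => hF j, Finset.sum_comm]
  have h2 : ∀ σ : Equiv.Perm (Fin (n+1)),
      (∑ j : Fin (n+1), ((Equiv.Perm.sign σ : ℝ) * (if σ i = j then 1 else 0)) *
          ∑ k ∈ s, (∏ m ∈ s.erase k, pderiv (σ m) (pderiv m u) x) *
            pderiv j (pderiv (σ k) (pderiv k u)) x)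
      = ∑ k ∈ s, (Equiv.Perm.sign σ : ℝ) *
          ((∏ m ∈ s.erase k, pderiv (σ m) (pderiv m u) x) *
            pderiv (σ i) (pderiv (σ k) (pderiv k u)) x) := by
    intro σ
    rw [Finset.sum_congr rfl (g := fun j => if σ i = j then
        ∑ k ∈ s, (Equiv.Perm.sign σ : ℝ) *
          ((∏ m ∈ s.erase k, pderiv (σ m) (pderiv m u) x) *
            pderiv j (pderiv (σ k) (pderiv k u)) x) else 0)
        (fun j _ => by by_cases hij : σ i = j <;> simp [hij, Finset.mul_sum, mul_assoc])]
    rw [Finset.sum_ite_eq]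
    simp
  rw [Finset.sum_congr rfl fun σ _ => h2 σ, Finset.sum_comm]
  -- Step 3: each inner sum vanishes by the swap involution
  refine Finset.sum_eq_zero fun k hk => ?_
  have hki : k ≠ i := Finset.ne_of_mem_erase hk
  set h : Equiv.Perm (Fin (n+1)) → ℝ := fun σ => (Equiv.Perm.sign σ : ℝ) *
      ((∏ m ∈ s.erase k, pderiv (σ m) (pderiv m u) x) *
        pderiv (σ i) (pderiv (σ k) (pderiv k u)) x) with hh
  have hneg : ∀ σ, h (σ * Equiv.swap i k) = - h σ := by
    intro σ
    have hsign : ((Equiv.Perm.sign (σ * Equiv.swap i k)) : ℝ)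
        = -(Equiv.Perm.sign σ : ℝ) := by
      rw [Equiv.Perm.sign_mul, Equiv.Perm.sign_swap (Ne.symm hki)]
      push_cast
      ring
    have happ_i : (σ * Equiv.swap i k) i = σ k := by simp [Equiv.Perm.mul_apply]
    have happ_k : (σ * Equiv.swap i k) k = σ i := by simp [Equiv.Perm.mul_apply]
    have hprod : ∏ m ∈ s.erase k, pderiv ((σ * Equiv.swap i k) m) (pderiv m u) x
        = ∏ m ∈ s.erase k, pderiv (σ m) (pderiv m u) x := by
      refine Finset.prod_congr rfl fun m hm => ?_
      have hmk : m ≠ k := Finset.ne_of_mem_erase hm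
      have hmi : m ≠ i := Finset.ne_of_mem_erase (Finset.mem_of_mem_erase hm)
      rw [Equiv.Perm.mul_apply, Equiv.swap_apply_of_ne_of_ne hmi hmk]
    have hpd : pderiv ((σ * Equiv.swap i k) i)
          (pderiv ((σ * Equiv.swap i k) k) (pderiv k u)) x
        = pderiv (σ i) (pderiv (σ k) (pderiv k u)) x := by
      rw [happ_i, happ_k]
      exact pderiv_comm (hu2 k) (σ k) (σ i) x
    rw [hh]
    simp only []
    rw [hsign, hprod, hpd]
    ring
  have hbij : ∑ σ : Equiv.Perm (Fin (n+1)), h (σ * Equiv.swap i k)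
      = ∑ σ : Equiv.Perm (Fin (n+1)), h σ :=
    Fintype.sum_equiv (Equiv.mulRight (Equiv.swap i k)) _ _ (fun σ => rfl)
  have hzero : ∑ σ : Equiv.Perm (Fin (n+1)), h σ
      = - ∑ σ : Equiv.Perm (Fin (n+1)), h σ := by
    conv_lhs => rw [← hbij]
    rw [Finset.sum_congr rfl fun σ _ => hneg σ, Finset.sum_neg_distrib]
  linarith
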